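/- arXiv:1407.6215 — 2 statements merged into one kernel-verified Lean document; each statement's English description precedes it below -/
import Mathlib

section
/- Let G be a finite group and L < H subgroups with L, H ∈ CD(G) such that the interval ⟦L,H⟧ in CD(G) is a quasi-antichain having at least three pairwise distinct atoms. Then any two atoms K, K' of the interval have the same order; for any atom K1, |H|·|L| = |K1|² (equivalently, the index of L in H is the square of the index of K1 in H); and |H|·|C_G(H)| = |L|·|C_G(L)|, so that the index of L in H equals the index of C_G(H) in C_G(L). -/
/-- The Chermak-Delgado measure of a subgroup `H` of a finite group `G`:
`m_G(H) = |H| · |C_G(H)|`. -/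
noncomputable def CDmeasure {G : Type*} [Group G] (H : Subgroup G) : ℕ :=
  Nat.card H * Nat.card (Subgroup.centralizer (H : Set G))

/-- `H` belongs to the Chermak-Delgado lattice of `G`: its measure is maximal. -/
def inCD {G : Type*} [Group G] (H : Subgroup G) : Prop :=
  ∀ K : Subgroup G, CDmeasure K ≤ CDmeasure H
section Aux

set_option linter.unusedSectionVars false
variable {G : Type*} [Group G] [Finite G]

lemma card_pos' (A : Subgroup G) : 0 < Nat.card A := Nat.card_pos

lemma relindex_pos' (A B : Subgroup G) : 0 < A.relIndex B :=
  Nat.pos_of_ne_zero Subgroup.index_ne_zero_of_finite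

lemma card_mul_relindex {A B : Subgroup G} (h : A ≤ B) :
    Nat.card A * A.relIndex B = Nat.card B := by
  have e : Nat.card (A.subgroupOf B) = Nat.card A :=
    Nat.card_congr (Subgroup.subgroupOfEquivOfLe h).toEquiv
  rw [Subgroup.relIndex, ← e]
  exact Subgroup.card_mul_index _

lemma mul_card_le_inf_sup (A B : Subgroup G) :
    Nat.card A * Nat.card B ≤
      Nat.card (A ⊓ B : Subgroup G) * Nat.card (A ⊔ B : Subgroup G) := by
  have h1 : Nat.card (A ⊓ B : Subgroup G) * (A ⊓ B).relIndex B = Nat.card B :=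
    card_mul_relindex inf_le_right
  have h2 : Nat.card A * A.relIndex (A ⊔ B) = Nat.card (A ⊔ B : Subgroup G) :=
    card_mul_relindex le_sup_left
  have h3 : (A ⊓ B).relIndex B = A.relIndex B := Subgroup.inf_relIndex_right A B
  have h4 : A.relIndex B ≤ A.relIndex (A ⊔ B) :=
    Subgroup.relIndex_le_of_le_right le_sup_right (relindex_pos' A (A ⊔ B)).ne'
  calc Nat.card A * Nat.card B
      = Nat.card (A ⊓ B : Subgroup G) * (Nat.card A * A.relIndex B) := by
        rw [← h1, h3]; ring
    _ ≤ Nat.card (A ⊓ B : Subgroup G) * (Nat.card A * A.relIndex (A ⊔ B)) := by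
        exact Nat.mul_le_mul_left _ (Nat.mul_le_mul_left _ h4)
    _ = Nat.card (A ⊓ B : Subgroup G) * Nat.card (A ⊔ B : Subgroup G) := by rw [h2]

lemma centralizer_sup_eq (A B : Subgroup G) :
    Subgroup.centralizer ((A ⊔ B : Subgroup G) : Set G) =
      Subgroup.centralizer (A : Set G) ⊓ Subgroup.centralizer (B : Set G) := by
  apply le_antisymm
  · exact le_inf (Subgroup.centralizer_le (SetLike.coe_subset_coe.mpr le_sup_left))
      (Subgroup.centralizer_le (SetLike.coe_subset_coe.mpr le_sup_right))
  · rw [Subgroup.le_centralizer_iff]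
    exact sup_le (Subgroup.le_centralizer_iff.mp inf_le_left)
      (Subgroup.le_centralizer_iff.mp inf_le_right)

lemma cd_inf_sup {A B : Subgroup G} (hA : inCD A) (hB : inCD B) :
    inCD (A ⊓ B) ∧ inCD (A ⊔ B) ∧
      Nat.card A * Nat.card B =
        Nat.card (A ⊓ B : Subgroup G) * Nat.card (A ⊔ B : Subgroup G) := by
  set CA := Subgroup.centralizer (A : Set G)
  set CB := Subgroup.centralizer (B : Set G)
  have hx : Nat.card A * Nat.card B ≤
      Nat.card (A ⊓ B : Subgroup G) * Nat.card (A ⊔ B : Subgroup G) :=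
    mul_card_le_inf_sup A B
  have hCsup : Subgroup.centralizer ((A ⊔ B : Subgroup G) : Set G) = CA ⊓ CB :=
    centralizer_sup_eq A B
  have hCinf : CA ⊔ CB ≤ Subgroup.centralizer ((A ⊓ B : Subgroup G) : Set G) :=
    sup_le (Subgroup.centralizer_le (SetLike.coe_subset_coe.mpr inf_le_left))
      (Subgroup.centralizer_le (SetLike.coe_subset_coe.mpr inf_le_right))
  have hu : Nat.card CA * Nat.card CB ≤
      Nat.card (Subgroup.centralizer ((A ⊔ B : Subgroup G) : Set G)) *
        Nat.card (Subgroup.centralizer ((A ⊓ B : Subgroup G) : Set G)) := by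
    calc Nat.card CA * Nat.card CB
        ≤ Nat.card (CA ⊓ CB : Subgroup G) * Nat.card (CA ⊔ CB : Subgroup G) :=
          mul_card_le_inf_sup CA CB
      _ ≤ Nat.card (CA ⊓ CB : Subgroup G) *
            Nat.card (Subgroup.centralizer ((A ⊓ B : Subgroup G) : Set G)) :=
          Nat.mul_le_mul_left _ (Subgroup.card_le_of_le hCinf)
      _ = _ := by rw [hCsup]
  -- measures
  have hmm : CDmeasure (A ⊓ B) * CDmeasure (A ⊔ B) ≤ CDmeasure A * CDmeasure B :=
    Nat.mul_le_mul (hA _) (hB _)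
  have hmm' : CDmeasure A * CDmeasure B ≤ CDmeasure (A ⊓ B) * CDmeasure (A ⊔ B) := by
    unfold CDmeasure
    calc Nat.card A * Nat.card CA * (Nat.card B * Nat.card CB)
        = (Nat.card A * Nat.card B) * (Nat.card CA * Nat.card CB) := by ring
      _ ≤ (Nat.card (A ⊓ B : Subgroup G) * Nat.card (A ⊔ B : Subgroup G)) *
          (Nat.card (Subgroup.centralizer ((A ⊔ B : Subgroup G) : Set G)) *
            Nat.card (Subgroup.centralizer ((A ⊓ B : Subgroup G) : Set G))) :=
          Nat.mul_le_mul hx hu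
      _ = _ := by ring
  have heq : CDmeasure A * CDmeasure B = CDmeasure (A ⊓ B) * CDmeasure (A ⊔ B) :=
    le_antisymm hmm' hmm
  -- extract card equality
  have hxy : Nat.card A * Nat.card B =
      Nat.card (A ⊓ B : Subgroup G) * Nat.card (A ⊔ B : Subgroup G) := by
    by_contra hne
    have hlt : Nat.card A * Nat.card B <
        Nat.card (A ⊓ B : Subgroup G) * Nat.card (A ⊔ B : Subgroup G) :=
      lt_of_le_of_ne hx hne
    have hupos : 0 < Nat.card CA * Nat.card CB :=
      Nat.mul_pos Nat.card_pos Nat.card_pos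
    have : CDmeasure A * CDmeasure B < CDmeasure (A ⊓ B) * CDmeasure (A ⊔ B) := by
      unfold CDmeasure
      calc Nat.card A * Nat.card CA * (Nat.card B * Nat.card CB)
          = (Nat.card A * Nat.card B) * (Nat.card CA * Nat.card CB) := by ring
        _ < (Nat.card (A ⊓ B : Subgroup G) * Nat.card (A ⊔ B : Subgroup G)) *
            (Nat.card (Subgroup.centralizer ((A ⊔ B : Subgroup G) : Set G)) *
              Nat.card (Subgroup.centralizer ((A ⊓ B : Subgroup G) : Set G))) := by
            apply Nat.mul_lt_mul_of_lt_of_le hlt hu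
            exact Nat.mul_pos Nat.card_pos Nat.card_pos
        _ = _ := by ring
    omega
  refine ⟨?_, ?_, hxy⟩
  · -- inCD (A ⊓ B)
    have hAB : CDmeasure A = CDmeasure B := le_antisymm (hB A) (hA B)
    have h1 : CDmeasure (A ⊓ B) ≤ CDmeasure A := hA _
    have h2 : CDmeasure (A ⊔ B) ≤ CDmeasure A := hA _
    have hpos : 0 < CDmeasure A :=
      Nat.mul_pos Nat.card_pos Nat.card_pos
    have : CDmeasure (A ⊓ B) = CDmeasure A := by nlinarith [heq]
    intro K
    rw [this]; exact hA K
  · have hAB : CDmeasure A = CDmeasure B := le_antisymm (hB A) (hA B)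
    have h1 : CDmeasure (A ⊓ B) ≤ CDmeasure A := hA _
    have h2 : CDmeasure (A ⊔ B) ≤ CDmeasure A := hA _
    have hpos : 0 < CDmeasure A :=
      Nat.mul_pos Nat.card_pos Nat.card_pos
    have : CDmeasure (A ⊔ B) = CDmeasure A := by nlinarith [heq]
    intro K
    rw [this]; exact hA K

end Aux

/-- if the interval `⟦L,H⟧` in `CD(G)` is a quasi-antichain with at
least three pairwise distinct atoms, then any two atoms have the same order, for
any atom `K1` we have `|H|·|L| = |K1|²` (equivalently `|H : K1|² = |H : L|`), and
`|H|·|C_G(H)| = |L|·|C_G(L)|`, so `|H : L| = |C_G(L) : C_G(H)|`. -/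
theorem stmt2 {G : Type*} [Group G] [Finite G] (L H : Subgroup G) (hLH : L < H)
    (hL : inCD L) (hH : inCD H)
    (hqa : ∀ K K' : Subgroup G, inCD K → inCD K' → L < K → K ≤ K' → K' < H → K = K')
    (hthree : ∃ K1 K2 K3 : Subgroup G,
      (inCD K1 ∧ L < K1 ∧ K1 < H) ∧ (inCD K2 ∧ L < K2 ∧ K2 < H) ∧
      (inCD K3 ∧ L < K3 ∧ K3 < H) ∧ K1 ≠ K2 ∧ K1 ≠ K3 ∧ K2 ≠ K3) :
    (∀ K K' : Subgroup G, (inCD K ∧ L < K ∧ K < H) → (inCD K' ∧ L < K' ∧ K' < H) →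
      Nat.card K = Nat.card K') ∧
    (∀ K1 : Subgroup G, (inCD K1 ∧ L < K1 ∧ K1 < H) →
      Nat.card H * Nat.card L = Nat.card K1 ^ 2 ∧
      L.relIndex H = K1.relIndex H ^ 2) ∧
    Nat.card H * Nat.card (Subgroup.centralizer (H : Set G)) =
      Nat.card L * Nat.card (Subgroup.centralizer (L : Set G)) ∧
    L.relIndex H =
      (Subgroup.centralizer (H : Set G)).relIndex (Subgroup.centralizer (L : Set G)) := by
  obtain ⟨K1, K2, K3, h1, h2, h3, h12, h13, h23⟩ := hthree
  have key : ∀ K K' : Subgroup G, (inCD K ∧ L < K ∧ K < H) → (inCD K' ∧ L < K' ∧ K' < H) →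
      K ≠ K' → Nat.card K * Nat.card K' = Nat.card L * Nat.card H := by
    rintro K K' ⟨cK, lK, Kh⟩ ⟨cK', lK', K'h⟩ hne
    obtain ⟨cdInf, cdSup, hprod⟩ := cd_inf_sup cK cK'
    have hKK' : ¬ K ≤ K' := fun hle => hne (hqa K K' cK cK' lK hle K'h)
    have hinf : K ⊓ K' = L := by
      rcases (le_inf lK.le lK'.le).lt_or_eq with hlt | he
      · have h := hqa (K ⊓ K') K cdInf cK hlt inf_le_left Kh
        exact absurd (h ▸ (inf_le_right : K ⊓ K' ≤ K')) hKK'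
      · exact he.symm
    have hsup : K ⊔ K' = H := by
      rcases (sup_le Kh.le K'h.le).lt_or_eq with hlt | he
      · have h := hqa K' (K ⊔ K') cK' cdSup lK' le_sup_right hlt
        exact absurd (h ▸ (le_sup_left : K ≤ K ⊔ K')) hKK'
      · exact he
    rw [hprod, hinf, hsup]
  have sq : ∀ K : Subgroup G, (inCD K ∧ L < K ∧ K < H) →
      Nat.card K ^ 2 = Nat.card L * Nat.card H := by
    intro K hK
    obtain ⟨A, B, hA, hB, hKA, hKB, hABne⟩ :
        ∃ A B : Subgroup G, (inCD A ∧ L < A ∧ A < H) ∧ (inCD B ∧ L < B ∧ B < H) ∧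
          K ≠ A ∧ K ≠ B ∧ A ≠ B := by
      by_cases e1 : K = K1
      · exact ⟨K2, K3, h2, h3, e1 ▸ h12, e1 ▸ h13, h23⟩
      by_cases e2 : K = K2
      · exact ⟨K1, K3, h1, h3, e1, e2 ▸ h23, h13⟩
      · exact ⟨K1, K2, h1, h2, e1, e2, h12⟩
    have hKA' := key K A hK hA hKA
    have hKB' := key K B hK hB hKB
    have hAB' := key A B hA hB hABne
    have hKpos : 0 < Nat.card K := Nat.card_pos
    have hApos : 0 < Nat.card A := Nat.card_pos
    have hABeq : Nat.card A = Nat.card B :=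
      Nat.eq_of_mul_eq_mul_left hKpos (hKA'.trans hKB'.symm)
    have hA2 : Nat.card A * Nat.card A = Nat.card L * Nat.card H := by
      rw [← hABeq] at hAB'; exact hAB'
    have hKA2 : Nat.card K = Nat.card A :=
      Nat.eq_of_mul_eq_mul_right hApos (hKA'.trans hA2.symm)
    rw [pow_two, hKA2]; exact hA2
  have hm : Nat.card H * Nat.card (Subgroup.centralizer (H : Set G)) =
      Nat.card L * Nat.card (Subgroup.centralizer (L : Set G)) :=
    le_antisymm (hL H) (hH L)
  refine ⟨?_, ?_, hm, ?_⟩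
  · intro K K' hK hK'
    exact Nat.pow_left_injective (by norm_num) ((sq K hK).trans (sq K' hK').symm)
  · intro K hK
    have hsq := sq K hK
    have hLcard : Nat.card L * L.relIndex H = Nat.card H := card_mul_relindex hLH.le
    have hKcard : Nat.card K * K.relIndex H = Nat.card H := card_mul_relindex hK.2.2.le
    refine ⟨by rw [hsq, Nat.mul_comm], ?_⟩
    have hKpos2 : 0 < Nat.card K ^ 2 := pow_pos Nat.card_pos 2
    apply Nat.eq_of_mul_eq_mul_right hKpos2
    calc L.relIndex H * Nat.card K ^ 2
        = L.relIndex H * (Nat.card L * Nat.card H) := by rw [hsq]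
      _ = (Nat.card L * L.relIndex H) * Nat.card H := by ring
      _ = Nat.card H * Nat.card H := by rw [hLcard]
      _ = (Nat.card K * K.relIndex H) * (Nat.card K * K.relIndex H) := by rw [hKcard]
      _ = K.relIndex H ^ 2 * Nat.card K ^ 2 := by ring
  · have hCle : Subgroup.centralizer (H : Set G) ≤ Subgroup.centralizer (L : Set G) :=
      Subgroup.centralizer_le (SetLike.coe_subset_coe.mpr hLH.le)
    have hc : Nat.card (Subgroup.centralizer (H : Set G)) *
        (Subgroup.centralizer (H : Set G)).relIndex (Subgroup.centralizer (L : Set G)) =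
        Nat.card (Subgroup.centralizer (L : Set G)) := card_mul_relindex hCle
    have hl : Nat.card L * L.relIndex H = Nat.card H := card_mul_relindex hLH.le
    have hpos : 0 < Nat.card L * Nat.card (Subgroup.centralizer (H : Set G)) :=
      Nat.mul_pos Nat.card_pos Nat.card_pos
    apply Nat.eq_of_mul_eq_mul_left hpos
    calc Nat.card L * Nat.card (Subgroup.centralizer (H : Set G)) * (L.relIndex H)
        = (Nat.card L * L.relIndex H) * Nat.card (Subgroup.centralizer (H : Set G)) := by ring
      _ = Nat.card H * Nat.card (Subgroup.centralizer (H : Set G)) := by rw [hl]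
      _ = Nat.card L * Nat.card (Subgroup.centralizer (L : Set G)) := hm
      _ = Nat.card L * (Nat.card (Subgroup.centralizer (H : Set G)) *
            (Subgroup.centralizer (H : Set G)).relIndex (Subgroup.centralizer (L : Set G))) := by
          rw [hc]
      _ = Nat.card L * Nat.card (Subgroup.centralizer (H : Set G)) *
            ((Subgroup.centralizer (H : Set G)).relIndex (Subgroup.centralizer (L : Set G))) := by
          ring
end

section
/- Let p be a prime and G a finite p-group such that CD(G) is a quasi-antichain of width w ≥ 3 with G ∈ CD(G), and let a be the positive integer with |G/Z(G)| = p^{2a}. Let t be the number of abelian atoms of CD(G). If t = 0 then p is odd. -/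
open Subgroup Pointwise
open scoped commutatorElement

set_option linter.unusedSectionVars false

section AuxCount


variable {G : Type*} [Group G] [Finite G]

private lemma aux_card_image_mk (H K : Subgroup G) :
    Nat.card (QuotientGroup.mk '' (H : Set G) : Set (G ⧸ K)) * Nat.card (H ⊓ K : Subgroup G)
      = Nat.card H := by
  classical
  have h2 : Nat.card ((H ⊓ K).subgroupOf H) = Nat.card (H ⊓ K : Subgroup G) :=
    Nat.card_congr (subgroupOfEquivOfLe inf_le_left).toEquiv
  have h3 : Nat.card (↥H ⧸ ((H ⊓ K).subgroupOf H))
      = Nat.card (QuotientGroup.mk '' (H : Set G) : Set (G ⧸ K)) := by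
    apply Nat.card_congr
    refine Equiv.ofBijective (fun x => Quotient.liftOn' x
        (fun h => (⟨QuotientGroup.mk (h : G), Set.mem_image_of_mem _ h.2⟩ :
          (QuotientGroup.mk '' (H : Set G) : Set (G ⧸ K)))) ?_) ⟨?_, ?_⟩
    · rintro ⟨h₁, hh₁⟩ ⟨h₂, hh₂⟩ hr
      have h0 : (⟨h₁, hh₁⟩ : ↥H)⁻¹ * ⟨h₂, hh₂⟩ ∈ (H ⊓ K).subgroupOf H :=
        QuotientGroup.leftRel_apply.mp hr
      have hk : h₁⁻¹ * h₂ ∈ K := (Subgroup.mem_subgroupOf.mp h0).2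
      exact Subtype.ext (QuotientGroup.eq.mpr hk)
    · intro x y
      induction x using Quotient.inductionOn' with | h x =>
      induction y using Quotient.inductionOn' with | h y =>
      intro hxy
      have : QuotientGroup.mk (x : G) = (QuotientGroup.mk (y : G) : G ⧸ K) :=
        congrArg Subtype.val hxy
      have hk : (x : G)⁻¹ * (y : G) ∈ K := QuotientGroup.eq.mp this
      apply Quotient.sound'
      refine QuotientGroup.leftRel_apply.mpr ?_
      exact Subgroup.mem_subgroupOf.mpr (Subgroup.mem_inf.mpr ⟨mul_mem (inv_mem x.2) y.2, hk⟩)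
    · rintro ⟨q, g, hg, rfl⟩
      exact ⟨Quotient.mk'' ⟨g, hg⟩, rfl⟩
  calc Nat.card (QuotientGroup.mk '' (H : Set G) : Set (G ⧸ K)) * Nat.card (H ⊓ K : Subgroup G)
      = Nat.card (↥H ⧸ ((H ⊓ K).subgroupOf H)) * Nat.card ((H ⊓ K).subgroupOf H) := by
        rw [h2, h3]
    _ = Nat.card H := (Subgroup.card_eq_card_quotient_mul_card_subgroup _).symm

private lemma aux_card_mul (H K : Subgroup G) :
    Nat.card ((H : Set G) * (K : Set G)) * Nat.card (H ⊓ K : Subgroup G)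
      = Nat.card H * Nat.card K := by
  have h1 := Subgroup.card_mul_eq_card_subgroup_mul_card_quotient K (H : Set G)
  have h2 := aux_card_image_mk H K
  calc Nat.card ((H : Set G) * (K : Set G)) * Nat.card (H ⊓ K : Subgroup G)
      = Nat.card K * (Nat.card (((H : Set G)).image ((↑) : G → G ⧸ K))
          * Nat.card (H ⊓ K : Subgroup G)) := by rw [h1]; ring
    _ = Nat.card K * Nat.card H := by rw [show ((H : Set G)).image ((↑) : G → G ⧸ K)
          = QuotientGroup.mk '' (H : Set G) from rfl, h2]
    _ = Nat.card H * Nat.card K := mul_comm _ _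

end AuxCount

section AuxCD

variable {G : Type*} [Group G] [Finite G]

private lemma aux_centralizer_sup (H K : Subgroup G) :
    centralizer ((H ⊔ K : Subgroup G) : Set G) = centralizer (H : Set G) ⊓ centralizer (K : Set G) := by
  apply le_antisymm
  · exact le_inf (centralizer_le (SetLike.coe_subset_coe.2 le_sup_left))
      (centralizer_le (SetLike.coe_subset_coe.2 le_sup_right))
  · intro g hg
    rcases Subgroup.mem_inf.mp hg with ⟨hg1, hg2⟩
    have hHg : H ≤ centralizer {g} := by
      intro h hh
      exact Subgroup.mem_centralizer_singleton_iff.mpr ((Subgroup.mem_centralizer_iff.mp hg1) h hh)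
    have hKg : K ≤ centralizer {g} := by
      intro h hh
      exact Subgroup.mem_centralizer_singleton_iff.mpr ((Subgroup.mem_centralizer_iff.mp hg2) h hh)
    refine Subgroup.mem_centralizer_iff.mpr ?_
    intro h hh
    have := sup_le hHg hKg hh
    exact (Subgroup.mem_centralizer_singleton_iff.mp this)

private lemma aux_centralizer_top :
    centralizer ((⊤ : Subgroup G) : Set G) = Subgroup.center G := by
  rw [Subgroup.coe_top, Subgroup.centralizer_univ]

private lemma aux_centralizer_center :
    centralizer ((Subgroup.center G : Subgroup G) : Set G) = ⊤ := by
  rw [Subgroup.centralizer_eq_top_iff_subset]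

private lemma aux_measure_top : CDmeasure (⊤ : Subgroup G) = Nat.card G * Nat.card (Subgroup.center G) := by
  unfold CDmeasure
  rw [aux_centralizer_top, Subgroup.card_top]

private lemma aux_measure_pos (H : Subgroup G) : 0 < CDmeasure H :=
  Nat.mul_pos Nat.card_pos Nat.card_pos

private lemma aux_measure_eq {H : Subgroup G} (htop : inCD (⊤ : Subgroup G)) (hH : inCD H) :
    CDmeasure H = Nat.card G * Nat.card (Subgroup.center G) := by
  rw [← aux_measure_top]
  exact le_antisymm (htop H) (hH ⊤)

private lemma aux_le_CC (H : Subgroup G) : H ≤ centralizer ((centralizer (H : Set G) : Subgroup G) : Set G) :=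
  Subgroup.le_centralizer_iff.mp le_rfl

private lemma aux_inCD_centralizer {H : Subgroup G} (htop : inCD (⊤ : Subgroup G)) (hH : inCD H) :
    inCD (centralizer (H : Set G)) ∧ centralizer ((centralizer (H : Set G) : Subgroup G) : Set G) = H := by
  have h1 : CDmeasure H ≤ CDmeasure (centralizer (H : Set G)) := by
    unfold CDmeasure
    rw [mul_comm]
    exact Nat.mul_le_mul_left _ (Subgroup.card_le_of_le (aux_le_CC H))
  have hcd : inCD (centralizer (H : Set G)) := fun K => le_trans (hH K) h1
  refine ⟨hcd, ?_⟩
  have h2 : CDmeasure (centralizer (H : Set G)) = CDmeasure H := by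
    rw [aux_measure_eq htop hcd, aux_measure_eq htop hH]
  unfold CDmeasure at h2
  rw [mul_comm (Nat.card H)] at h2
  have h3 : Nat.card (centralizer ((centralizer (H : Set G) : Subgroup G) : Set G)) = Nat.card H :=
    Nat.eq_of_mul_eq_mul_left Nat.card_pos h2
  exact (Subgroup.eq_of_le_of_card_ge (aux_le_CC H) (le_of_eq h3)).symm

private lemma aux_mul_set_subset (H K L : Subgroup G) (h1 : H ≤ L) (h2 : K ≤ L) :
    (H : Set G) * (K : Set G) ⊆ (L : Set G) := by
  rintro x ⟨a, ha, b, hb, rfl⟩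
  exact mul_mem (h1 ha) (h2 hb)

private lemma aux_card_set_le {s t : Set G} (h : s ⊆ t) : Nat.card s ≤ Nat.card t := by
  rw [Nat.card_coe_set_eq, Nat.card_coe_set_eq]
  exact Set.ncard_le_ncard h (Set.toFinite t)

private lemma aux_card_mul_pos (H K : Subgroup G) : 0 < Nat.card ((H : Set G) * (K : Set G)) := by
  have : (1 : G) ∈ (H : Set G) * (K : Set G) := ⟨1, one_mem H, 1, one_mem K, one_mul 1⟩
  have hne : ((H : Set G) * (K : Set G)).Nonempty := ⟨1, this⟩
  rw [Nat.card_coe_set_eq]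
  exact hne.ncard_pos (Set.toFinite _)


private lemma aux_squeeze {x y X Y : ℕ} (hx : x ≤ X) (hy : y ≤ Y) (h : X * Y ≤ x * y)
    (hxp : 0 < x) (hyp : 0 < y) : x = X ∧ y = Y := by
  have h1 : x * y ≤ X * y := Nat.mul_le_mul_right _ hx
  have h2 : X * y ≤ X * Y := Nat.mul_le_mul_left _ hy
  have e1 : x * y = X * y := le_antisymm h1 (by omega)
  have e2 : X * y = X * Y := le_antisymm h2 (by omega)
  have hX : 0 < X := lt_of_lt_of_le hxp hx
  exact ⟨Nat.eq_of_mul_eq_mul_right hyp e1, Nat.eq_of_mul_eq_mul_left hX e2⟩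

private lemma aux_CD_meet_join {H K : Subgroup G} (htop : inCD (⊤ : Subgroup G))
    (hH : inCD H) (hK : inCD K) :
    inCD (H ⊓ K) ∧ inCD (H ⊔ K) ∧
      Nat.card ((H : Set G) * (K : Set G)) = Nat.card (H ⊔ K : Subgroup G) := by
  classical
  set M := Nat.card G * Nat.card (Subgroup.center G) with hM
  have hMpos : 0 < M := Nat.mul_pos Nat.card_pos Nat.card_pos
  have hle : ∀ X : Subgroup G, CDmeasure X ≤ M := by
    intro X
    calc CDmeasure X ≤ CDmeasure (⊤ : Subgroup G) := htop X
      _ = M := by rw [hM]; exact aux_measure_top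
  set a := Nat.card ((H : Set G) * (K : Set G)) with ha
  set b := Nat.card (H ⊓ K : Subgroup G) with hb
  set c := Nat.card ((centralizer (H : Set G) : Set G) * (centralizer (K : Set G) : Set G)) with hc
  set d := Nat.card (centralizer (H : Set G) ⊓ centralizer (K : Set G) : Subgroup G) with hd
  have e1 : a * b = Nat.card H * Nat.card K := aux_card_mul H K
  have e2 : c * d = Nat.card (centralizer (H : Set G)) * Nat.card (centralizer (K : Set G)) :=
    aux_card_mul _ _
  have i1 : a ≤ Nat.card (H ⊔ K : Subgroup G) :=
    aux_card_set_le (aux_mul_set_subset H K (H ⊔ K) le_sup_left le_sup_right)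
  have i2 : c ≤ Nat.card (centralizer ((H ⊓ K : Subgroup G) : Set G)) := by
    refine aux_card_set_le (aux_mul_set_subset _ _ _ ?_ ?_)
    · exact centralizer_le (SetLike.coe_subset_coe.2 inf_le_left)
    · exact centralizer_le (SetLike.coe_subset_coe.2 inf_le_right)
  have e3 : d = Nat.card (centralizer ((H ⊔ K : Subgroup G) : Set G)) := by
    rw [hd, aux_centralizer_sup]
  have hprod : (b * c) * (a * d) = M * M := by
    have h0 : (a * b) * (c * d) = M * M := by
      rw [e1, e2]
      have h1 : CDmeasure H = M := by rw [hM]; exact aux_measure_eq htop hH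
      have h2 : CDmeasure K = M := by rw [hM]; exact aux_measure_eq htop hK
      unfold CDmeasure at h1 h2
      calc Nat.card ↥H * Nat.card ↥K *
            (Nat.card (centralizer (H : Set G)) * Nat.card (centralizer (K : Set G)))
          = (Nat.card ↥H * Nat.card (centralizer (H : Set G))) *
            (Nat.card ↥K * Nat.card (centralizer (K : Set G))) := by ring
        _ = M * M := by rw [h1, h2]
    rw [← h0]; ring
  have hbc : b * c ≤ CDmeasure (H ⊓ K) := by
    unfold CDmeasure
    exact Nat.mul_le_mul_left _ i2
  have had : a * d ≤ CDmeasure (H ⊔ K) := by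
    unfold CDmeasure
    rw [← e3]
    exact Nat.mul_le_mul_right _ i1
  have hbcpos : 0 < b * c := Nat.mul_pos Nat.card_pos (aux_card_mul_pos _ _)
  have hadpos : 0 < a * d := Nat.mul_pos (aux_card_mul_pos _ _) Nat.card_pos
  have hsq1 := aux_squeeze hbc had (by rw [hprod]; exact Nat.mul_le_mul (hle _) (hle _)) hbcpos hadpos
  -- hsq1 : b*c = m(H⊓K) ∧ a*d = m(H⊔K)
  have hmeetM : CDmeasure (H ⊓ K) = M := by
    have h2 := aux_squeeze (hle (H ⊓ K)) (hle (H ⊔ K))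
      (by rw [← hsq1.1, ← hsq1.2, hprod]) (aux_measure_pos _) (aux_measure_pos _)
    exact h2.1
  have hjoinM : CDmeasure (H ⊔ K) = M := by
    have h2 := aux_squeeze (hle (H ⊓ K)) (hle (H ⊔ K))
      (by rw [← hsq1.1, ← hsq1.2, hprod]) (aux_measure_pos _) (aux_measure_pos _)
    exact h2.2
  have hCDmeet : inCD (H ⊓ K) := by
    intro X
    calc CDmeasure X ≤ M := hle X
      _ = CDmeasure (H ⊓ K) := hmeetM.symm
  have hCDjoin : inCD (H ⊔ K) := by
    intro X
    calc CDmeasure X ≤ M := hle X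
      _ = CDmeasure (H ⊔ K) := hjoinM.symm
  refine ⟨hCDmeet, hCDjoin, ?_⟩
  have h6 : a * d = Nat.card (H ⊔ K : Subgroup G) * d := by
    have := hsq1.2
    unfold CDmeasure at this
    rw [← e3] at this
    exact this
  exact Nat.eq_of_mul_eq_mul_right Nat.card_pos h6

end AuxCD

section AuxQuot

variable {G : Type*} [Group G] [Finite G]

private lemma aux_mem_map_mk {Z X : Subgroup G} [Z.Normal] (hZX : Z ≤ X) (x : G) :
    QuotientGroup.mk x ∈ X.map (QuotientGroup.mk' Z) ↔ x ∈ X := by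
  constructor
  · rintro ⟨y, hy, hxy⟩
    have : y⁻¹ * x ∈ Z := by
      have := QuotientGroup.eq.mp (hxy : QuotientGroup.mk y = QuotientGroup.mk x)
      exact this
    have : x = y * (y⁻¹ * x) := by group
    rw [this]
    exact mul_mem hy (hZX ‹y⁻¹ * x ∈ Z›)
  · intro hx
    exact ⟨x, hx, rfl⟩

private lemma aux_card_map_mk {Z X : Subgroup G} [Z.Normal] (hZX : Z ≤ X) :
    Nat.card (X.map (QuotientGroup.mk' Z)) * Nat.card Z = Nat.card X := by
  have h1 := aux_card_image_mk X Z
  rw [inf_eq_right.mpr hZX] at h1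
  rw [← h1]
  congr 1

private lemma aux_map_inf_eq_bot {Z X Y : Subgroup G} [Z.Normal]
    (hZX : Z ≤ X) (hZY : Z ≤ Y) (hXY : X ⊓ Y = Z) :
    X.map (QuotientGroup.mk' Z) ⊓ Y.map (QuotientGroup.mk' Z) = ⊥ := by
  rw [eq_bot_iff]
  intro v hv
  obtain ⟨g, rfl⟩ := QuotientGroup.mk'_surjective Z v
  rcases Subgroup.mem_inf.mp hv with ⟨h1, h2⟩
  have hg1 : g ∈ X := (aux_mem_map_mk hZX g).mp h1
  have hg2 : g ∈ Y := (aux_mem_map_mk hZY g).mp h2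
  have : g ∈ Z := by rw [← hXY]; exact Subgroup.mem_inf.mpr ⟨hg1, hg2⟩
  have hker : g ∈ (QuotientGroup.mk' Z).ker := by rw [QuotientGroup.ker_mk']; exact this
  simpa using (MonoidHom.mem_ker.mp hker)

end AuxQuot

section AuxClass2

variable {G : Type*} [Group G]

private lemma aux_comm_central {x y z₁ z₂ : G} (hz₁ : z₁ ∈ Subgroup.center G)
    (hz₂ : z₂ ∈ Subgroup.center G) : ⁅x * z₁, y * z₂⁆ = ⁅x, y⁆ := by
  have c1 : ∀ g : G, g * z₁ = z₁ * g := fun g => (Subgroup.mem_center_iff.mp hz₁ g)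
  have c2 : ∀ g : G, g * z₂ = z₂ * g := fun g => (Subgroup.mem_center_iff.mp hz₂ g)
  rw [commutatorElement_def, commutatorElement_def]
  calc x * z₁ * (y * z₂) * (x * z₁)⁻¹ * (y * z₂)⁻¹
      = x * (z₁ * y) * z₂ * (z₁⁻¹ * x⁻¹) * (z₂⁻¹ * y⁻¹) := by
        rw [mul_inv_rev, mul_inv_rev]; group
    _ = x * (y * z₁) * z₂ * (z₁⁻¹ * x⁻¹) * (z₂⁻¹ * y⁻¹) := by rw [c1 y]
    _ = x * y * ((z₁ * z₂) * z₁⁻¹) * x⁻¹ * (z₂⁻¹ * y⁻¹) := by group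
    _ = x * y * ((z₂ * z₁) * z₁⁻¹) * x⁻¹ * (z₂⁻¹ * y⁻¹) := by rw [c2 z₁]
    _ = x * y * (z₂ * x⁻¹) * z₂⁻¹ * y⁻¹ := by group
    _ = x * y * (x⁻¹ * z₂) * z₂⁻¹ * y⁻¹ := by rw [c2 x⁻¹]
    _ = x * y * x⁻¹ * y⁻¹ := by group

private lemma aux_step {X Y W W' : Subgroup G}
    (hXYZ : X ⊓ Y ≤ Subgroup.center G)
    (hcommXY : ∀ x ∈ X, ∀ y ∈ Y, x * y = y * x)
    (hcommWW' : ∀ u ∈ W, ∀ v ∈ W', u * v = v * u)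
    (hW'Y : (W' : Set G) * (Y : Set G) = Set.univ)
    (hWY : (W : Set G) * (Y : Set G) = Set.univ)
    {x₁ x₂ : G} (hx₁ : x₁ ∈ X) (hx₂ : x₂ ∈ X) : ⁅x₁, x₂⁆ ∈ Subgroup.center G := by
  have h1 : x₁ ∈ (W' : Set G) * (Y : Set G) := by rw [hW'Y]; trivial
  have h2 : x₂ ∈ (W : Set G) * (Y : Set G) := by rw [hWY]; trivial
  obtain ⟨c, hc, y₁, hy₁, hcy⟩ := h1
  obtain ⟨l, hl, y₂, hy₂, hly⟩ := h2
  have hcdef : c = x₁ * y₁⁻¹ := by rw [← hcy]; group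
  have hldef : l = x₂ * y₂⁻¹ := by rw [← hly]; group
  have hcl : l * c = c * l := hcommWW' l hl c hc
  have comm1 : x₂ * y₁⁻¹ = y₁⁻¹ * x₂ := hcommXY x₂ hx₂ y₁⁻¹ (inv_mem hy₁)
  have comm2 : x₁ * y₂⁻¹ = y₂⁻¹ * x₁ := hcommXY x₁ hx₁ y₂⁻¹ (inv_mem hy₂)
  have E : x₁ * x₂ * (y₁⁻¹ * y₂⁻¹) = x₂ * x₁ * (y₂⁻¹ * y₁⁻¹) := by
    have e1 : c * l = x₁ * x₂ * (y₁⁻¹ * y₂⁻¹) := by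
      rw [hcdef, hldef]
      calc x₁ * y₁⁻¹ * (x₂ * y₂⁻¹) = x₁ * (y₁⁻¹ * x₂) * y₂⁻¹ := by group
        _ = x₁ * (x₂ * y₁⁻¹) * y₂⁻¹ := by rw [← comm1]
        _ = x₁ * x₂ * (y₁⁻¹ * y₂⁻¹) := by group
    have e2 : l * c = x₂ * x₁ * (y₂⁻¹ * y₁⁻¹) := by
      rw [hcdef, hldef]
      calc x₂ * y₂⁻¹ * (x₁ * y₁⁻¹) = x₂ * (y₂⁻¹ * x₁) * y₁⁻¹ := by group
        _ = x₂ * (x₁ * y₂⁻¹) * y₁⁻¹ := by rw [← comm2]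
        _ = x₂ * x₁ * (y₂⁻¹ * y₁⁻¹) := by group
    rw [← e1, ← e2, hcl]
  have hw1 : x₁⁻¹ * x₂⁻¹ * x₁ * x₂ = y₂⁻¹ * y₁⁻¹ * y₂ * y₁ := by
    have h2' : (x₂ * x₁)⁻¹ * (x₁ * x₂ * (y₁⁻¹ * y₂⁻¹)) * (y₁⁻¹ * y₂⁻¹)⁻¹
        = (x₂ * x₁)⁻¹ * (x₂ * x₁ * (y₂⁻¹ * y₁⁻¹)) * (y₁⁻¹ * y₂⁻¹)⁻¹ := by rw [E]
    calc x₁⁻¹ * x₂⁻¹ * x₁ * x₂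
        = (x₂ * x₁)⁻¹ * (x₁ * x₂ * (y₁⁻¹ * y₂⁻¹)) * (y₁⁻¹ * y₂⁻¹)⁻¹ := by group
      _ = (x₂ * x₁)⁻¹ * (x₂ * x₁ * (y₂⁻¹ * y₁⁻¹)) * (y₁⁻¹ * y₂⁻¹)⁻¹ := h2'
      _ = y₂⁻¹ * y₁⁻¹ * y₂ * y₁ := by group
  have hwX : x₁⁻¹ * x₂⁻¹ * x₁ * x₂ ∈ X :=
    mul_mem (mul_mem (mul_mem (inv_mem hx₁) (inv_mem hx₂)) hx₁) hx₂
  have hwY : x₁⁻¹ * x₂⁻¹ * x₁ * x₂ ∈ Y := by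
    rw [hw1]
    exact mul_mem (mul_mem (mul_mem (inv_mem hy₂) (inv_mem hy₁)) hy₂) hy₁
  have hwZ : x₁⁻¹ * x₂⁻¹ * x₁ * x₂ ∈ Subgroup.center G :=
    hXYZ (Subgroup.mem_inf.mpr ⟨hwX, hwY⟩)
  have hconj : ⁅x₁, x₂⁆ = (x₂ * x₁) * (x₁⁻¹ * x₂⁻¹ * x₁ * x₂) * (x₂ * x₁)⁻¹ := by
    rw [commutatorElement_def]; group
  rw [hconj]
  exact (Subgroup.center G).normal_of_characteristic.conj_mem _ hwZ _

private lemma aux_class2 {A B L L' : Subgroup G}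
    (hABZ : A ⊓ B ≤ Subgroup.center G)
    (hcommAB : ∀ x ∈ A, ∀ y ∈ B, x * y = y * x)
    (hcommLL' : ∀ u ∈ L, ∀ v ∈ L', u * v = v * u)
    (hL'B : (L' : Set G) * (B : Set G) = Set.univ)
    (hLB : (L : Set G) * (B : Set G) = Set.univ)
    (hL'A : (L' : Set G) * (A : Set G) = Set.univ)
    (hLA : (L : Set G) * (A : Set G) = Set.univ)
    (hABuniv : (A : Set G) * (B : Set G) = Set.univ) :
    ∀ g h : G, ⁅g, h⁆ ∈ Subgroup.center G := by
  have hA : ∀ x₁ ∈ A, ∀ x₂ ∈ A, ⁅x₁, x₂⁆ ∈ Subgroup.center G := fun x₁ h₁ x₂ h₂ =>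
    aux_step hABZ hcommAB hcommLL' hL'B hLB h₁ h₂
  have hB : ∀ y₁ ∈ B, ∀ y₂ ∈ B, ⁅y₁, y₂⁆ ∈ Subgroup.center G := by
    intro y₁ h₁ y₂ h₂
    refine aux_step (X := B) (Y := A) ?_ ?_ hcommLL' hL'A hLA h₁ h₂
    · rw [inf_comm]; exact hABZ
    · intro x hx y hy; exact (hcommAB y hy x hx).symm
  intro g h
  have hg : g ∈ (A : Set G) * (B : Set G) := by rw [hABuniv]; trivial
  have hh : h ∈ (A : Set G) * (B : Set G) := by rw [hABuniv]; trivial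
  obtain ⟨α, hα, β, hβ, rfl⟩ := hg
  obtain ⟨α', hα', β', hβ', rfl⟩ := hh
  set zA := ⁅α, α'⁆ with hzA
  set zB := ⁅β, β'⁆ with hzB
  have hzAc : zA ∈ Subgroup.center G := hA α hα α' hα'
  have hzBc : zB ∈ Subgroup.center G := hB β hβ β' hβ'
  have czA : ∀ g : G, g * zA = zA * g := fun g => Subgroup.mem_center_iff.mp hzAc g
  have czB : ∀ g : G, g * zB = zB * g := fun g => Subgroup.mem_center_iff.mp hzBc g
  have haa : α * α' = zA * (α' * α) := by rw [hzA, commutatorElement_def]; group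
  have hbb : β * β' = zB * (β' * β) := by rw [hzB, commutatorElement_def]; group
  have hcomm1 : β * α' = α' * β := (hcommAB α' hα' β hβ).symm
  have hcomm2 : β' * α = α * β' := (hcommAB α hα β' hβ').symm
  have hgh : (α * β) * (α' * β') = zA * zB * ((α' * β') * (α * β)) := by
    calc (α * β) * (α' * β') = α * (β * α') * β' := by group
      _ = α * (α' * β) * β' := by rw [hcomm1]
      _ = (α * α') * (β * β') := by group
      _ = (zA * (α' * α)) * (zB * (β' * β)) := by rw [haa, hbb]
      _ = zA * ((α' * α) * zB) * (β' * β) := by group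
      _ = zA * (zB * (α' * α)) * (β' * β) := by rw [czB (α' * α)]
      _ = zA * zB * (α' * (α * β') * β) := by group
      _ = zA * zB * (α' * (β' * α) * β) := by rw [← hcomm2]
      _ = zA * zB * ((α' * β') * (α * β)) := by group
  have : ⁅α * β, α' * β'⁆ = zA * zB := by
    rw [commutatorElement_def]
    calc (α * β) * (α' * β') * (α * β)⁻¹ * (α' * β')⁻¹
        = ((α * β) * (α' * β')) * ((α' * β') * (α * β))⁻¹ := by group
      _ = (zA * zB * ((α' * β') * (α * β))) * ((α' * β') * (α * β))⁻¹ := by rw [hgh]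
      _ = zA * zB := by group
  rw [this]
  exact mul_mem hzAc hzBc

end AuxClass2
section AuxGraph

private lemma aux_graph {V : Type*} [Group V] [Finite V]
    (hVcomm : ∀ u v : V, u * v = v * u)
    (Ab Bb Wb : Subgroup V)
    (hWA : Wb ⊓ Ab = ⊥) (hWB : Wb ⊓ Bb = ⊥)
    (hdec : ∀ v : V, ∃ x : ↥Ab, ∃ y : ↥Bb, (x : V) * y = v)
    (hcard : Nat.card Ab = Nat.card Wb) (hcardB : Nat.card Ab = Nat.card Bb) :
    ∃ e : ↥Ab ≃* ↥Bb, ∀ x : ↥Ab, (x : V) * (e x) ∈ Wb := by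
  classical
  have cancel : ∀ (xx : V) (b b' : V), (xx * b) * (xx * b')⁻¹ = b * b'⁻¹ := by
    intro xx b b'
    calc (xx * b) * (xx * b')⁻¹ = xx * (b * b'⁻¹) * xx⁻¹ := by group
      _ = (b * b'⁻¹) * xx * xx⁻¹ := by rw [hVcomm xx (b * b'⁻¹)]
      _ = b * b'⁻¹ := by group
  have hex : ∀ x : ↥Ab, ∃! y : ↥Bb, (x : V) * y ∈ Wb := by
    have jA : ∀ l : ↥Wb, ∃ x : ↥Ab, ∃ y : ↥Bb, (x : V) * y = (l : V) := fun l => hdec l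
    set JA : ↥Wb → ↥Ab := fun l => (jA l).choose with hJA
    have JB : ∀ l : ↥Wb, ∃ y : ↥Bb, ((JA l : V)) * y = (l : V) := fun l => (jA l).choose_spec
    set JBf : ↥Wb → ↥Bb := fun l => (JB l).choose with hJBf
    have Jspec : ∀ l : ↥Wb, ((JA l : V)) * (JBf l) = (l : V) := fun l => (JB l).choose_spec
    have Jinj : Function.Injective JA := by
      intro l l' hll
      have hm : (l : V) * (l' : V)⁻¹ = (JBf l : V) * (JBf l' : V)⁻¹ := by
        rw [← Jspec l, ← Jspec l', hll]
        exact cancel _ _ _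
      have hmW : (l : V) * (l' : V)⁻¹ ∈ Wb := mul_mem l.2 (inv_mem l'.2)
      have hmB : (l : V) * (l' : V)⁻¹ ∈ Bb := by
        rw [hm]; exact mul_mem (JBf l).2 (inv_mem (JBf l').2)
      have : (l : V) * (l' : V)⁻¹ = 1 := by
        have h0 := Subgroup.mem_inf.mpr ⟨hmW, hmB⟩
        rw [hWB] at h0
        simpa using h0
      have : (l : V) = (l' : V) := by
        rw [mul_inv_eq_one] at this; exact this
      exact Subtype.ext this
    have Jbij : Function.Bijective JA :=
      (Nat.bijective_iff_injective_and_card JA).mpr ⟨Jinj, hcard.symm⟩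
    intro x
    obtain ⟨l, hl⟩ := Jbij.surjective x
    refine ⟨JBf l, ?_, ?_⟩
    · show (x : V) * (JBf l : V) ∈ Wb
      rw [← hl, Jspec l]; exact l.2
    · intro y hy
      have hy' : (x : V) * (JBf l) ∈ Wb := by rw [← hl, Jspec l]; exact l.2
      have hm : ((x : V) * y) * ((x : V) * (JBf l))⁻¹ = (y : V) * (JBf l : V)⁻¹ :=
        cancel _ _ _
      have hmW : ((x : V) * y) * ((x : V) * (JBf l))⁻¹ ∈ Wb := mul_mem hy (inv_mem hy')
      have hmB : (y : V) * (JBf l : V)⁻¹ ∈ Bb := mul_mem y.2 (inv_mem (JBf l).2)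
      have h0 : (y : V) * (JBf l : V)⁻¹ = 1 := by
        have := Subgroup.mem_inf.mpr ⟨(hm ▸ hmW), hmB⟩
        rw [hWB] at this
        simpa using this
      rw [mul_inv_eq_one] at h0
      exact Subtype.ext h0
  set σf : ↥Ab → ↥Bb := fun x => (hex x).choose with hσf
  have σspec : ∀ x : ↥Ab, (x : V) * (σf x) ∈ Wb := fun x => (hex x).choose_spec.1
  have σuniq : ∀ (x : ↥Ab) (y : ↥Bb), (x : V) * y ∈ Wb → y = σf x :=
    fun x y hy => (hex x).choose_spec.2 y hy
  have σmul : ∀ x y : ↥Ab, σf (x * y) = σf x * σf y := by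
    intro x y
    refine (σuniq (x * y) (σf x * σf y) ?_).symm
    have : ((x * y : ↥Ab) : V) * ((σf x * σf y : ↥Bb) : V)
        = ((x : V) * σf x) * ((y : V) * σf y) := by
      push_cast
      calc (x : V) * y * ((σf x : V) * (σf y : V))
          = (x : V) * ((y : V) * (σf x : V)) * (σf y : V) := by group
        _ = (x : V) * ((σf x : V) * (y : V)) * (σf y : V) := by rw [hVcomm (y : V) (σf x : V)]
        _ = (x : V) * (σf x : V) * ((y : V) * (σf y : V)) := by group
    rw [this]
    exact mul_mem (σspec x) (σspec y)
  have σinj : Function.Injective σf := by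
    intro x x' hxx
    have hm : ((x : V) * σf x) * ((x' : V) * σf x')⁻¹ = (x : V) * (x' : V)⁻¹ := by
      rw [hxx]
      calc ((x : V) * σf x') * ((x' : V) * σf x')⁻¹
          = (x : V) * ((σf x' : V) * ((x' : V) * (σf x' : V))⁻¹) := by group
        _ = (x : V) * (x' : V)⁻¹ := by group
    have hmW : ((x : V) * σf x) * ((x' : V) * σf x')⁻¹ ∈ Wb :=
      mul_mem (σspec x) (inv_mem (σspec x'))
    have hmA : (x : V) * (x' : V)⁻¹ ∈ Ab := mul_mem x.2 (inv_mem x'.2)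
    have h0 : (x : V) * (x' : V)⁻¹ = 1 := by
      have := Subgroup.mem_inf.mpr ⟨(hm ▸ hmW), hmA⟩
      rw [hWA] at this
      simpa using this
    rw [mul_inv_eq_one] at h0
    exact Subtype.ext h0
  have σbij : Function.Bijective σf :=
    (Nat.bijective_iff_injective_and_card σf).mpr ⟨σinj, hcardB⟩
  exact ⟨MulEquiv.ofBijective (MonoidHom.mk' σf σmul) σbij, σspec⟩

end AuxGraph
section AuxFinal

open QuotientGroup

variable {G : Type*} [Group G] [Finite G]

set_option maxHeartbeats 2000000 in
private lemma aux_final (p a : ℕ) (hp : p.Prime) (hp2 : p = 2) (ha : 0 < a)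
    (A B L L' : Subgroup G)
    (hZA : Subgroup.center G ≤ A) (hZB : Subgroup.center G ≤ B)
    (hZL : Subgroup.center G ≤ L) (hZL' : Subgroup.center G ≤ L')
    (hABZ : A ⊓ B = Subgroup.center G)
    (hLAZ : L ⊓ A = Subgroup.center G) (hLBZ : L ⊓ B = Subgroup.center G)
    (hL'AZ : L' ⊓ A = Subgroup.center G) (hL'BZ : L' ⊓ B = Subgroup.center G)
    (hcommAB : ∀ x ∈ A, ∀ y ∈ B, x * y = y * x)
    (hcommLL' : ∀ u ∈ L, ∀ v ∈ L', u * v = v * u)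
    (hABuniv : (A : Set G) * (B : Set G) = Set.univ)
    (hc2 : ∀ g h : G, ⁅g, h⁆ ∈ Subgroup.center G)
    (s : ℕ) (hcA : Nat.card A = s) (hcB : Nat.card B = s)
    (hcL : Nat.card L = s) (hcL' : Nat.card L' = s)
    (hspow : s = p ^ a * Nat.card (Subgroup.center G))
    (hG : Nat.card G = p ^ (2 * a) * Nat.card (Subgroup.center G))
    (hTop : inCD (⊤ : Subgroup G))
    (hmeet : ∀ X Y : Subgroup G, inCD X → inCD Y → Subgroup.center G < X → X < ⊤ →
      Subgroup.center G < Y → Y < ⊤ → X ≠ Y → X ⊓ Y = Subgroup.center G)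
    (hnab : ∀ X : Subgroup G, inCD X → Subgroup.center G < X → X < ⊤ →
      (∀ x y : ↥X, x * y = y * x) → False) :
    False := by
  classical
  set Z := Subgroup.center G with hZdef
  -- the quotient
  have hVcomm : ∀ u v : G ⧸ Z, u * v = v * u := by
    intro u v
    induction u using QuotientGroup.induction_on with | H x =>
    induction v using QuotientGroup.induction_on with | H y =>
    have hz : x * y = ⁅x, y⁆ * (y * x) := by rw [commutatorElement_def]; group
    calc (QuotientGroup.mk x : G ⧸ Z) * QuotientGroup.mk y = QuotientGroup.mk (x * y) := rfl
      _ = QuotientGroup.mk (⁅x, y⁆ * (y * x)) := by rw [← hz]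
      _ = QuotientGroup.mk ⁅x, y⁆ * QuotientGroup.mk (y * x) := rfl
      _ = QuotientGroup.mk (y * x) := by
          rw [(QuotientGroup.eq_one_iff _).mpr (hc2 x y), one_mul]
      _ = QuotientGroup.mk y * QuotientGroup.mk x := rfl
  -- the commutator form
  have fwd : ∀ (x₁ x₂ y₁ y₂ : G), (QuotientGroup.leftRel Z) x₁ y₁ →
      (QuotientGroup.leftRel Z) x₂ y₂ → ⁅x₁, x₂⁆ = ⁅y₁, y₂⁆ := by
    intro x₁ x₂ y₁ y₂ h1 h2
    have hz1 : x₁⁻¹ * y₁ ∈ Z := QuotientGroup.leftRel_apply.mp h1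
    have hz2 : x₂⁻¹ * y₂ ∈ Z := QuotientGroup.leftRel_apply.mp h2
    have e1 : y₁ = x₁ * (x₁⁻¹ * y₁) := by group
    have e2 : y₂ = x₂ * (x₂⁻¹ * y₂) := by group
    rw [e1, e2, aux_comm_central hz1 hz2]
  let f : G ⧸ Z → G ⧸ Z → G := fun u v =>
    Quotient.liftOn₂' u v (fun x y => ⁅x, y⁆) fwd
  have f_mk : ∀ x y : G, f (QuotientGroup.mk x) (QuotientGroup.mk y) = ⁅x, y⁆ := fun x y => rfl
  have f_mem : ∀ u v, f u v ∈ Z := by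
    intro u v
    induction u using QuotientGroup.induction_on with | H x =>
    induction v using QuotientGroup.induction_on with | H y =>
    exact hc2 x y
  have f_skew : ∀ u v, f u v = (f v u)⁻¹ := by
    intro u v
    induction u using QuotientGroup.induction_on with | H x =>
    induction v using QuotientGroup.induction_on with | H y =>
    rw [f_mk, f_mk, commutatorElement_inv]
  have f_mul_left : ∀ u w v, f (u * w) v = f u v * f w v := by
    intro u w v
    induction u using QuotientGroup.induction_on with | H x =>
    induction w using QuotientGroup.induction_on with | H x' =>
    induction v using QuotientGroup.induction_on with | H y =>
    have : (QuotientGroup.mk x : G ⧸ Z) * QuotientGroup.mk x' = QuotientGroup.mk (x * x') := rfl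
    rw [this, f_mk, f_mk, f_mk]
    have hcen : ∀ g : G, g * ⁅x', y⁆ = ⁅x', y⁆ * g :=
      fun g => Subgroup.mem_center_iff.mp (hc2 x' y) g
    have h1 : ⁅x * x', y⁆ = x * ⁅x', y⁆ * y * x⁻¹ * y⁻¹ := by
      rw [commutatorElement_def, commutatorElement_def]; group
    rw [h1, hcen x, hcen ⁅x, y⁆, commutatorElement_def x y]
    simp [mul_assoc]
  have f_mul_right : ∀ u v w, f u (v * w) = f u v * f u w := by
    intro u v w
    rw [f_skew u (v * w), f_mul_left, mul_inv_rev, ← f_skew, ← f_skew]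
    exact (Subgroup.mem_center_iff.mp (f_mem u w) (f u v)).symm
  -- images in the quotient
  set mkZ := QuotientGroup.mk' Z with hmkZ
  set Abar := A.map mkZ with hAbar
  set Bbar := B.map mkZ with hBbar
  set Lbar := L.map mkZ with hLbar
  set L'bar := L'.map mkZ with hL'bar
  have hfAB : ∀ u ∈ Abar, ∀ v ∈ Bbar, f u v = 1 := by
    rintro u ⟨x, hx, rfl⟩ v ⟨y, hy, rfl⟩
    exact commutatorElement_eq_one_iff_mul_comm.mpr (hcommAB x hx y hy)
  have hfBA : ∀ u ∈ Bbar, ∀ v ∈ Abar, f u v = 1 := by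
    intro u hu v hv
    rw [f_skew, hfAB v hv u hu, inv_one]
  have hfLL' : ∀ u ∈ Lbar, ∀ v ∈ L'bar, f u v = 1 := by
    rintro u ⟨x, hx, rfl⟩ v ⟨y, hy, rfl⟩
    exact commutatorElement_eq_one_iff_mul_comm.mpr (hcommLL' x hx y hy)
  -- trivial intersections
  have hAB0 : Abar ⊓ Bbar = ⊥ := aux_map_inf_eq_bot hZA hZB hABZ
  have hLA0 : Lbar ⊓ Abar = ⊥ := aux_map_inf_eq_bot hZL hZA hLAZ
  have hLB0 : Lbar ⊓ Bbar = ⊥ := aux_map_inf_eq_bot hZL hZB hLBZ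
  have hL'A0 : L'bar ⊓ Abar = ⊥ := aux_map_inf_eq_bot hZL' hZA hL'AZ
  have hL'B0 : L'bar ⊓ Bbar = ⊥ := aux_map_inf_eq_bot hZL' hZB hL'BZ
  -- cardinalities
  have hcAbar : Nat.card Abar * Nat.card Z = s := by rw [aux_card_map_mk hZA, hcA]
  have hcBbar : Nat.card Bbar * Nat.card Z = s := by rw [aux_card_map_mk hZB, hcB]
  have hcLbar : Nat.card Lbar * Nat.card Z = s := by rw [aux_card_map_mk hZL, hcL]
  have hcL'bar : Nat.card L'bar * Nat.card Z = s := by rw [aux_card_map_mk hZL', hcL']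
  have hZpos : 0 < Nat.card Z := Nat.card_pos
  have hcABbar : Nat.card Abar = Nat.card Bbar :=
    Nat.eq_of_mul_eq_mul_right hZpos (hcAbar.trans hcBbar.symm)
  have hcALbar : Nat.card Abar = Nat.card Lbar :=
    Nat.eq_of_mul_eq_mul_right hZpos (hcAbar.trans hcLbar.symm)
  have hcAL'bar : Nat.card Abar = Nat.card L'bar :=
    Nat.eq_of_mul_eq_mul_right hZpos (hcAbar.trans hcL'bar.symm)
  -- decomposition
  have hdec : ∀ v : G ⧸ Z, ∃ x : ↥Abar, ∃ y : ↥Bbar, (x : G ⧸ Z) * y = v := by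
    intro v
    obtain ⟨g, rfl⟩ := QuotientGroup.mk'_surjective Z v
    have hg : g ∈ (A : Set G) * (B : Set G) := by rw [hABuniv]; trivial
    obtain ⟨x, hx, y, hy, rfl⟩ := hg
    exact ⟨⟨mkZ x, Subgroup.mem_map_of_mem mkZ hx⟩, ⟨mkZ y, Subgroup.mem_map_of_mem mkZ hy⟩,
      (map_mul mkZ x y).symm⟩
  have huniq : ∀ (x x' : ↥Abar) (y y' : ↥Bbar),
      (x : G ⧸ Z) * y = (x' : G ⧸ Z) * y' → x = x' ∧ y = y' := by
    intro x x' y y' h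
    have h1 : ((x' : G ⧸ Z))⁻¹ * x = (y' : G ⧸ Z) * (y : G ⧸ Z)⁻¹ := by
      calc ((x' : G ⧸ Z))⁻¹ * (x : G ⧸ Z)
          = ((x' : G ⧸ Z))⁻¹ * ((x : G ⧸ Z) * y) * ((y : G ⧸ Z))⁻¹ := by group
        _ = ((x' : G ⧸ Z))⁻¹ * ((x' : G ⧸ Z) * y') * ((y : G ⧸ Z))⁻¹ := by rw [h]
        _ = (y' : G ⧸ Z) * ((y : G ⧸ Z))⁻¹ := by group
    have hmemA : ((x' : G ⧸ Z))⁻¹ * x ∈ Abar := mul_mem (inv_mem x'.2) x.2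
    have hmemB : ((x' : G ⧸ Z))⁻¹ * x ∈ Bbar := by
      rw [h1]; exact mul_mem y'.2 (inv_mem y.2)
    have hbot : ((x' : G ⧸ Z))⁻¹ * x = 1 := by
      have := Subgroup.mem_inf.mpr ⟨hmemA, hmemB⟩
      rw [hAB0] at this
      simpa using this
    have hx : (x : G ⧸ Z) = (x' : G ⧸ Z) := by
      have := hbot
      rw [inv_mul_eq_one] at this
      exact this.symm
    have hxx : x = x' := Subtype.ext hx
    refine ⟨hxx, ?_⟩
    apply Subtype.ext
    have h2 : (x : G ⧸ Z) * y = (x : G ⧸ Z) * y' := by rw [h, hx]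
    exact mul_left_cancel h2
  -- graph isomorphisms from L and L'
  obtain ⟨σe, σspec⟩ := aux_graph hVcomm Abar Bbar Lbar hLA0 hLB0 hdec hcALbar hcABbar
  obtain ⟨γe, γspec⟩ := aux_graph hVcomm Abar Bbar L'bar hL'A0 hL'B0 hdec hcAL'bar hcABbar
  set R : MulAut ↥Abar := γe.trans σe.symm with hR
  have hσR : ∀ x : ↥Abar, σe (R x) = γe x := by
    intro x
    show σe (σe.symm (γe x)) = γe x
    exact σe.apply_symm_apply _
  have hstar : ∀ x y : ↥Abar, f ↑(σe x) ↑(γe y) = (f ↑x ↑y)⁻¹ := by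
    intro x y
    have h1 : f ((x : G ⧸ Z) * ↑(σe x)) ((y : G ⧸ Z) * ↑(γe y)) = 1 :=
      hfLL' _ (σspec x) _ (γspec y)
    rw [f_mul_left, f_mul_right, f_mul_right,
        hfAB ↑x x.2 _ (γe y).2, hfBA _ (σe x).2 _ y.2, mul_one, one_mul] at h1
    exact (inv_eq_of_mul_eq_one_right h1).symm
  have hRval : ∀ x y : ↥Abar, f ↑(σe x) ↑(σe (R y)) = (f ↑x ↑y)⁻¹ := by
    intro x y
    rw [hσR y]
    exact hstar x y
  have hadj : ∀ x y : ↥Abar, f ↑(σe (R x)) ↑(σe y) = f ↑(σe x) ↑(σe (R y)) := by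
    intro x y
    rw [hRval x y, hσR x]
    calc f ↑(γe x) ↑(σe y) = (f ↑(σe y) ↑(γe x))⁻¹ := f_skew _ _
      _ = ((f ↑y ↑x)⁻¹)⁻¹ := by rw [hstar y x]
      _ = f ↑y ↑x := inv_inv _
      _ = ((f ↑x ↑y)⁻¹⁻¹)⁻¹ := by rw [inv_inv]; exact f_skew _ _
      _ = (f ↑x ↑y)⁻¹ := by rw [inv_inv]
  have hpow : ∀ (k : ℕ) (x y : ↥Abar),
      f ↑(σe ((R ^ k) x)) ↑(σe y) = f ↑(σe x) ↑(σe ((R ^ k) y)) := by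
    intro k
    induction k with
    | zero => intro x y; rw [pow_zero]; rfl
    | succ k ih =>
      intro x y
      have e1 : (R ^ (k + 1)) x = (R ^ k) (R x) := by rw [pow_succ]; rfl
      have e2 : (R ^ (k + 1)) y = R ((R ^ k) y) := by rw [pow_succ']; rfl
      rw [e1, ih (R x) y, hadj x ((R ^ k) y), ← e2]
  have hkey : ∀ (i j : ℕ) (x y : ↥Abar),
      f ↑(σe ((R ^ i) x)) ↑(σe ((R ^ j) y)) = f ↑(σe x) ↑(σe ((R ^ (i + j)) y)) := by
    intro i j x y
    rw [hpow i x ((R ^ j) y)]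
    have : (R ^ (i + j)) y = (R ^ i) ((R ^ j) y) := by rw [pow_add]; rfl
    rw [this]
  -- the graph subgroups
  have θmul : ∀ (k : ℕ) (x y : ↥Abar),
      ((x * y : ↥Abar) : G ⧸ Z) * ↑(σe ((R ^ k) (x * y)))
        = ((x : G ⧸ Z) * ↑(σe ((R ^ k) x))) * ((y : G ⧸ Z) * ↑(σe ((R ^ k) y))) := by
    intro k x y
    have e0 : (R ^ k) (x * y) = (R ^ k) x * (R ^ k) y := map_mul _ _ _
    rw [e0, map_mul]
    push_cast
    calc (x : G ⧸ Z) * y * (↑(σe ((R ^ k) x)) * ↑(σe ((R ^ k) y)))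
        = (x : G ⧸ Z) * ((y : G ⧸ Z) * ↑(σe ((R ^ k) x))) * ↑(σe ((R ^ k) y)) := by group
      _ = (x : G ⧸ Z) * (↑(σe ((R ^ k) x)) * (y : G ⧸ Z)) * ↑(σe ((R ^ k) y)) := by
          rw [hVcomm ((y : G ⧸ Z)) (↑(σe ((R ^ k) x)))]
      _ = (x : G ⧸ Z) * ↑(σe ((R ^ k) x)) * ((y : G ⧸ Z) * ↑(σe ((R ^ k) y))) := by group
  let θ : ℕ → (↥Abar →* G ⧸ Z) := fun k =>
    MonoidHom.mk' (fun x => (x : G ⧸ Z) * ↑(σe ((R ^ k) x))) (θmul k)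
  have θapp : ∀ (k : ℕ) (x : ↥Abar), θ k x = (x : G ⧸ Z) * ↑(σe ((R ^ k) x)) := fun _ _ => rfl
  set Ubar : ℕ → Subgroup (G ⧸ Z) := fun k => (θ k).range with hUbardef
  have θinj : ∀ k, Function.Injective (θ k) := by
    intro k x y hxy
    exact (huniq x y (σe ((R ^ k) x)) (σe ((R ^ k) y)) hxy).1
  have cardUbar : ∀ k, Nat.card (Ubar k) = Nat.card ↥Abar := by
    intro k
    calc Nat.card (Ubar k) = Nat.card (Set.range (θ k)) :=
          Nat.card_congr (Equiv.setCongr (θ k).coe_range)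
      _ = Nat.card ↥Abar := Nat.card_congr (Equiv.ofInjective _ (θinj k)).symm
  set Uhat : ℕ → Subgroup G := fun k => (Ubar k).comap mkZ with hUhatdef
  have hZU : ∀ k, Z ≤ Uhat k := by
    intro k z hz
    show mkZ z ∈ Ubar k
    have h1 : mkZ z = 1 := (QuotientGroup.eq_one_iff z).mpr hz
    rw [h1]
    exact one_mem _
  have hmapU : ∀ k, (Uhat k).map mkZ = Ubar k := fun k =>
    Subgroup.map_comap_eq_self_of_surjective (QuotientGroup.mk'_surjective Z) _
  have cardUhat : ∀ k, Nat.card (Uhat k) = s := by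
    intro k
    have h1 := aux_card_map_mk (hZU k)
    rw [hmapU k, cardUbar k] at h1
    rw [← h1, hcAbar]
  have hcommU : ∀ i j : ℕ, (R ^ (i + j) = R) → ∀ g1 ∈ Uhat i, ∀ g2 ∈ Uhat j,
      g1 * g2 = g2 * g1 := by
    intro i j hij g1 hg1 g2 hg2
    have h1 : f (mkZ g1) (mkZ g2) = 1 := by
      obtain ⟨x, hx⟩ := MonoidHom.mem_range.mp (Subgroup.mem_comap.mp hg1)
      obtain ⟨y, hy⟩ := MonoidHom.mem_range.mp (Subgroup.mem_comap.mp hg2)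
      rw [← hx, ← hy, θapp, θapp, f_mul_left, f_mul_right, f_mul_right,
          hfAB ↑x x.2 _ (σe ((R ^ j) y)).2, hfBA _ (σe ((R ^ i) x)).2 _ y.2, mul_one, one_mul,
          hkey i j x y, hij, hRval x y]
      exact mul_inv_cancel _
    have h2 : ⁅g1, g2⁆ = 1 := h1
    exact commutatorElement_eq_one_iff_mul_comm.mp h2
  have hUCD : ∀ i j : ℕ, (R ^ (i + j) = R) → inCD (Uhat i) := by
    intro i j hij K
    have hsub : Uhat j ≤ Subgroup.centralizer ((Uhat i : Subgroup G) : Set G) := by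
      intro g hg
      rw [Subgroup.mem_centralizer_iff]
      intro h hh
      exact hcommU i j hij h hh g hg
    have hpp : p ^ a * p ^ a = p ^ (2 * a) := by rw [← pow_add, two_mul]
    have h2 : s * s = Nat.card G * Nat.card Z := by
      rw [hspow, hG, ← hpp]; ring
    have h1 : s * s ≤ CDmeasure (Uhat i) := by
      unfold CDmeasure
      rw [cardUhat i]
      refine Nat.mul_le_mul_left s ?_
      rw [← cardUhat j]
      exact Subgroup.card_le_of_le hsub
    calc CDmeasure K ≤ CDmeasure (⊤ : Subgroup G) := hTop K
      _ = Nat.card G * Nat.card Z := aux_measure_top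
      _ = s * s := h2.symm
      _ ≤ CDmeasure (Uhat i) := h1
  have hatomU : ∀ i : ℕ, Z < Uhat i ∧ Uhat i < ⊤ := by
    intro i
    have hZlt : Nat.card Z < s := by
      rw [hspow]
      have h1 : 1 < p ^ a := Nat.one_lt_pow ha.ne' hp.one_lt
      nlinarith [Nat.card_pos (α := ↥Z)]
    constructor
    · refine lt_of_le_of_ne (hZU i) ?_
      intro heq
      have := cardUhat i
      rw [← heq] at this
      omega
    · refine lt_top_iff_ne_top.mpr ?_
      intro heq
      have h1 := cardUhat i
      rw [heq] at h1
      have h2 : Nat.card (⊤ : Subgroup G) = Nat.card G := Subgroup.card_top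
      have hlt : s < Nat.card G := by
        rw [hspow, hG]
        have : p ^ a < p ^ (2 * a) := Nat.pow_lt_pow_right hp.one_lt (by omega)
        exact (Nat.mul_lt_mul_right Nat.card_pos).mpr this
      omega
  haveI : Finite (MulAut ↥Abar) :=
    Finite.of_injective (fun e => (e : ↥Abar → ↥Abar)) (fun e1 e2 h => by
      apply MulEquiv.ext
      intro x
      exact congrFun h x)
  set n := orderOf R with hn
  have hnpos : 0 < n := orderOf_pos R
  rcases Nat.even_or_odd n with hev | hodd
  · -- n even : contradiction using p = 2
    obtain ⟨m, hm⟩ := hev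
    have hmpos : 0 < m := by omega
    have hmlt : m < n := by omega
    set S := R ^ m with hS
    have hS2 : S * S = 1 := by
      rw [hS, ← pow_add, ← hm, hn]
      exact pow_orderOf_eq_one R
    have hSne : S ≠ 1 := by
      intro h1
      have h2 : orderOf R ∣ m := orderOf_dvd_of_pow_eq_one h1
      have := Nat.le_of_dvd hmpos h2
      omega
    have hcond1 : R ^ (m + (m + 1)) = R := by
      have e : m + (m + 1) = n + 1 := by omega
      rw [e, pow_succ, hn, pow_orderOf_eq_one, one_mul]
    have hcond0 : R ^ (0 + 1) = R := by rw [zero_add, pow_one]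
    have hCDm : inCD (Uhat m) := hUCD m (m + 1) hcond1
    have hCD0 : inCD (Uhat 0) := hUCD 0 1 hcond0
    have hatm := hatomU m
    have hat0 := hatomU 0
    have hne : Uhat m ≠ Uhat 0 := by
      intro heq
      apply hSne
      have hUbeq : Ubar m = Ubar 0 := by rw [← hmapU m, ← hmapU 0, heq]
      apply MulEquiv.ext
      intro x
      have hxm : θ m x ∈ Ubar 0 := by rw [← hUbeq]; exact ⟨x, rfl⟩
      obtain ⟨y, hy⟩ := hxm
      have h12 := huniq y x (σe ((R ^ 0) y)) (σe ((R ^ m) x)) hy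
      have h3 : (R ^ 0) y = (R ^ m) x := σe.injective h12.2
      rw [pow_zero] at h3
      calc S x = (R ^ m) x := rfl
        _ = (1 : MulAut ↥Abar) y := h3.symm
        _ = y := rfl
        _ = x := h12.1
    have hmeet0 : Uhat m ⊓ Uhat 0 = Z :=
      hmeet _ _ hCDm hCD0 hatm.1 hatm.2 hat0.1 hat0.2 hne
    have τinj : ∀ x : ↥Abar, S x = x → x = 1 := by
      intro x hSx
      have e : (R ^ m) x = (R ^ 0) x := by
        rw [pow_zero]
        exact hSx
      have hθ : θ m x = θ 0 x := by
        rw [θapp, θapp, e]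
      have hvm : θ 0 x ∈ Ubar m := by rw [← hθ]; exact ⟨x, rfl⟩
      have hv0 : θ 0 x ∈ Ubar 0 := ⟨x, rfl⟩
      obtain ⟨g, hg⟩ := QuotientGroup.mk'_surjective Z (θ 0 x)
      have hg1 : g ∈ Uhat m := by show mkZ g ∈ Ubar m; rw [hg]; exact hvm
      have hg2 : g ∈ Uhat 0 := by show mkZ g ∈ Ubar 0; rw [hg]; exact hv0
      have hgZ : g ∈ Z := by rw [← hmeet0]; exact Subgroup.mem_inf.mpr ⟨hg1, hg2⟩
      have hv1 : θ 0 x = 1 := by rw [← hg]; exact (QuotientGroup.eq_one_iff g).mpr hgZ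
      have h4 : θ 0 x = θ 0 1 := by rw [hv1, map_one]
      exact θinj 0 h4
    have hSinv : ∀ x : ↥Abar, S x = x⁻¹ := by
      intro x
      have h1 : S (S x) = x := by
        have h0 : (S * S) x = x := by rw [hS2]; rfl
        calc S (S x) = (S * S) x := rfl
          _ = x := h0
      have hy : S (S x * x) = S x * x := by
        rw [map_mul, h1]
        apply Subtype.ext
        push_cast
        exact hVcomm _ _
      have h2 := τinj (S x * x) hy
      rwa [mul_eq_one_iff_eq_inv] at h2
    have hcardAbar : Nat.card ↥Abar = p ^ a := by
      have h0 := hcAbar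
      rw [hspow] at h0
      exact Nat.eq_of_mul_eq_mul_right hZpos h0
    have h2a : Nat.card ↥Abar = 2 ^ a := by rw [hcardAbar, hp2]
    haveI : Nontrivial ↥Abar := by
      apply Finite.one_lt_card_iff_nontrivial.mp
      rw [h2a]
      exact Nat.one_lt_pow ha.ne' one_lt_two
    obtain ⟨x, hxne⟩ := exists_ne (1 : ↥Abar)
    have hdvd : orderOf x ∣ 2 ^ a := by rw [← h2a]; exact orderOf_dvd_natCard x
    obtain ⟨k, hkle, hk⟩ := (Nat.dvd_prime_pow Nat.prime_two).mp hdvd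
    have hkpos : 0 < k := by
      rcases Nat.eq_zero_or_pos k with h0 | h
      · exfalso
        rw [h0, pow_zero] at hk
        exact hxne (orderOf_eq_one_iff.mp hk)
      · exact h
    set x₀ := x ^ (2 ^ (k - 1)) with hx₀
    have hx₀ne : x₀ ≠ 1 := by
      intro h1
      have h2 : orderOf x ∣ 2 ^ (k - 1) := orderOf_dvd_of_pow_eq_one h1
      rw [hk] at h2
      have h3 := Nat.le_of_dvd (Nat.pow_pos (n := k - 1) (by omega : 0 < 2)) h2
      have h4 : (2 : ℕ) ^ (k - 1) < 2 ^ k := Nat.pow_lt_pow_right one_lt_two (by omega)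
      omega
    have hx₀sq : x₀ * x₀ = 1 := by
      rw [hx₀, ← pow_add]
      have e : 2 ^ (k - 1) + 2 ^ (k - 1) = 2 ^ k := by
        have e2 : k - 1 + 1 = k := by omega
        calc 2 ^ (k - 1) + 2 ^ (k - 1) = 2 ^ (k - 1) * 2 := by ring
          _ = 2 ^ (k - 1 + 1) := (pow_succ 2 (k - 1)).symm
          _ = 2 ^ k := by rw [e2]
      rw [e, ← hk]
      exact pow_orderOf_eq_one x
    have hx₀inv : x₀⁻¹ = x₀ := inv_eq_of_mul_eq_one_right hx₀sq
    have hfix : S x₀ = x₀ := by rw [hSinv x₀, hx₀inv]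
    exact hx₀ne (τinj x₀ hfix)
  · -- n odd : an abelian atom exists, contradiction
    obtain ⟨m, hm⟩ := hodd
    set k := m + 1 with hk
    have hcond : R ^ (k + k) = R := by
      have e : k + k = n + 1 := by omega
      rw [e, pow_succ, hn, pow_orderOf_eq_one, one_mul]
    have hCD : inCD (Uhat k) := hUCD k k hcond
    have hat := hatomU k
    refine hnab (Uhat k) hCD hat.1 hat.2 ?_
    intro u v
    apply Subtype.ext
    push_cast
    exact hcommU k k hcond ↑u u.2 ↑v v.2

end AuxFinal

/-- `CD(G)` is a quasi-antichain of width `w` with `G ∈ CD(G)`. -/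
def IsQACD (G : Type*) [Group G] (w : ℕ) : Prop :=
  inCD (⊤ : Subgroup G) ∧ inCD (Subgroup.center G) ∧
  (∀ K : Subgroup G, inCD K → Subgroup.center G ≤ K) ∧
  (∀ K K' : Subgroup G, inCD K → inCD K' →
    Subgroup.center G < K → K ≤ K' → K' < ⊤ → K = K') ∧
  {K : Subgroup G | inCD K ∧ Subgroup.center G < K ∧ K < ⊤}.ncard = w

/-- The set of abelian atoms of the quasi-antichain `CD(G)`. -/
def abelianAtoms (G : Type*) [Group G] : Set (Subgroup G) :=
  {K : Subgroup G | inCD K ∧ Subgroup.center G < K ∧ K < ⊤ ∧ ∀ x y : K, x * y = y * x}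

/-- for a finite `p`-group `G` with `CD(G)` a quasi-antichain of
width `w ≥ 3`, `G ∈ CD(G)`, and `|G/Z(G)| = p^(2a)`: if the number `t` of
abelian atoms is `0`, then `p` is odd. -/
theorem stmt9 {G : Type*} [Group G] [Finite G] (p : ℕ) (hp : p.Prime)
    (hpG : IsPGroup p G) (w : ℕ) (hw : 3 ≤ w) (hQA : IsQACD G w)
    (a : ℕ) (ha : 0 < a)
    (hcard : Nat.card (G ⧸ Subgroup.center G) = p ^ (2 * a))
    (t : ℕ) (ht : t = (abelianAtoms G).ncard) :
    t = 0 → Odd p := by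
  classical
  intro ht0
  obtain ⟨hTop, hZCD, hGe, hAnti, hwidth⟩ := hQA
  refine hp.odd_of_ne_two ?_
  intro hp2
  haveI : Finite (Subgroup G) :=
    Finite.of_injective (fun (H : Subgroup G) => (H : Set G)) SetLike.coe_injective
  -- there are no abelian atoms
  have h0 : (abelianAtoms G).ncard = 0 := by rw [← ht]; exact ht0
  have hAbE : abelianAtoms G = ∅ := (Set.ncard_eq_zero (Set.toFinite _)).mp h0
  have hnab : ∀ X : Subgroup G, inCD X → Subgroup.center G < X → X < ⊤ →
      (∀ x y : ↥X, x * y = y * x) → False := by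
    intro X h1 h2 h3 h4
    have : X ∈ abelianAtoms G := ⟨h1, h2, h3, h4⟩
    rw [hAbE] at this
    exact this
  -- pairs of distinct atoms
  have hPair : ∀ X Y : Subgroup G, inCD X → inCD Y → Subgroup.center G < X → X < ⊤ →
      Subgroup.center G < Y → Y < ⊤ → X ≠ Y →
      (X ⊓ Y = Subgroup.center G) ∧ ((X : Set G) * (Y : Set G) = Set.univ) ∧
        (Nat.card X * Nat.card Y = Nat.card G * Nat.card (Subgroup.center G)) := by
    intro X Y hX hY hZX hXt hZY hYt hne
    obtain ⟨hmCD, hjCD, hcardj⟩ := aux_CD_meet_join hTop hX hY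
    have hmeetZ : X ⊓ Y = Subgroup.center G := by
      have hZle : Subgroup.center G ≤ X ⊓ Y := hGe _ hmCD
      by_contra hne2
      have hlt : Subgroup.center G < X ⊓ Y := lt_of_le_of_ne hZle (Ne.symm hne2)
      have h5 : X ⊓ Y = X := hAnti (X ⊓ Y) X hmCD hX hlt inf_le_left hXt
      have h6 : X ≤ Y := inf_eq_left.mp h5
      exact hne (hAnti X Y hX hY hZX h6 hYt)
    have hjtop : X ⊔ Y = ⊤ := by
      by_contra hne2
      have hlt : X ⊔ Y < ⊤ := lt_top_iff_ne_top.mpr hne2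
      have h5 : X = X ⊔ Y := hAnti X (X ⊔ Y) hX hjCD hZX le_sup_left hlt
      have h6 : Y ≤ X := sup_eq_left.mp h5.symm
      exact hne (hAnti Y X hY hX hZY h6 hXt).symm
    have hcg : Nat.card ((X : Set G) * (Y : Set G)) = Nat.card G := by
      rw [hcardj, hjtop, Subgroup.card_top]
    refine ⟨hmeetZ, ?_, ?_⟩
    · apply Set.eq_of_subset_of_ncard_le (Set.subset_univ _) ?_ (Set.toFinite _)
      rw [Set.ncard_univ, ← Nat.card_coe_set_eq, hcg]
    · have := aux_card_mul X Y
      rw [hcg, hmeetZ] at this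
      exact this.symm
  -- pick the atoms
  set At : Set (Subgroup G) := {K | inCD K ∧ Subgroup.center G < K ∧ K < ⊤} with hAt
  have hwidth' : At.ncard = w := hwidth
  have hAtne : At.Nonempty := by
    apply Set.nonempty_of_ncard_ne_zero
    rw [hwidth']
    omega
  obtain ⟨A, hACD, hAZ, hAtop⟩ := hAtne
  set B := Subgroup.centralizer (A : Set G) with hB
  obtain ⟨hBCD, hCCA⟩ := aux_inCD_centralizer hTop hACD
  have hZB : Subgroup.center G ≤ B := Subgroup.center_le_centralizer _
  have hMA : CDmeasure A = Nat.card G * Nat.card (Subgroup.center G) := aux_measure_eq hTop hACD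
  have hBZ : Subgroup.center G < B := by
    refine lt_of_le_of_ne hZB ?_
    intro heq
    have h1 : CDmeasure A = Nat.card A * Nat.card B := rfl
    rw [← heq] at h1
    have h2 : Nat.card A = Nat.card G := by
      have := hMA
      rw [h1, mul_comm (Nat.card A)] at this
      exact Nat.eq_of_mul_eq_mul_left Nat.card_pos (this.trans (mul_comm _ _))
    exact (lt_top_iff_ne_top.mp hAtop) (Subgroup.eq_top_of_card_eq _ h2)
  have hBtop : B < ⊤ := by
    refine lt_top_iff_ne_top.mpr ?_
    intro heq
    have h1 : A = Subgroup.center G := by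
      rw [← hCCA, ← hB, heq, aux_centralizer_top]
    exact (ne_of_gt hAZ) h1
  have hAB_ne : A ≠ B := by
    intro heq
    refine hnab A hACD hAZ hAtop ?_
    intro x y
    apply Subtype.ext
    have hyB : (y : G) ∈ B := by rw [← heq]; exact y.2
    exact Subgroup.mem_centralizer_iff.mp hyB (x : G) x.2
  -- a third atom
  have hL : ∃ L, (L ∈ At) ∧ L ≠ A ∧ L ≠ B := by
    by_contra hcon
    push_neg at hcon
    have hsub : At ⊆ {A, B} := by
      intro K hK
      rcases Classical.em (K = A) with h | h
      · exact Or.inl h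
      · rcases Classical.em (K = B) with h2 | h2
        · exact Or.inr h2
        · exact absurd (And.intro hK (And.intro h h2)) (by
            intro hcc
            exact hcc.2.2 (hcon K hcc.1 hcc.2.1))
    have h1 : At.ncard ≤ 2 := by
      calc At.ncard ≤ ({A, B} : Set (Subgroup G)).ncard :=
            Set.ncard_le_ncard hsub (Set.toFinite _)
        _ ≤ 2 := by
            calc ({A, B} : Set (Subgroup G)).ncard ≤ ({B} : Set (Subgroup G)).ncard + 1 :=
                  Set.ncard_insert_le _ _
              _ ≤ 2 := by rw [Set.ncard_singleton]
    omega
  obtain ⟨L, ⟨hLCD, hLZ, hLtop⟩, hLA, hLB⟩ := hL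
  set L' := Subgroup.centralizer (L : Set G) with hL'
  obtain ⟨hL'CD, hCCL⟩ := aux_inCD_centralizer hTop hLCD
  have hZL' : Subgroup.center G ≤ L' := Subgroup.center_le_centralizer _
  have hML : CDmeasure L = Nat.card G * Nat.card (Subgroup.center G) := aux_measure_eq hTop hLCD
  have hL'Z : Subgroup.center G < L' := by
    refine lt_of_le_of_ne hZL' ?_
    intro heq
    have h1 : CDmeasure L = Nat.card L * Nat.card L' := rfl
    rw [← heq] at h1
    have h2 : Nat.card L = Nat.card G := by
      have := hML
      rw [h1, mul_comm (Nat.card L)] at this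
      exact Nat.eq_of_mul_eq_mul_left Nat.card_pos (this.trans (mul_comm _ _))
    exact (lt_top_iff_ne_top.mp hLtop) (Subgroup.eq_top_of_card_eq _ h2)
  have hL'top : L' < ⊤ := by
    refine lt_top_iff_ne_top.mpr ?_
    intro heq
    have h1 : L = Subgroup.center G := by
      rw [← hCCL, ← hL', heq, aux_centralizer_top]
    exact (ne_of_gt hLZ) h1
  have hL'L : L' ≠ L := by
    intro heq
    refine hnab L hLCD hLZ hLtop ?_
    intro x y
    apply Subtype.ext
    have hyL' : (y : G) ∈ L' := by rw [heq]; exact y.2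
    exact Subgroup.mem_centralizer_iff.mp hyL' (x : G) x.2
  have hCCL' : L = Subgroup.centralizer (L' : Set G) := by
    rw [hL']; exact hCCL.symm
  have hCCA' : Subgroup.centralizer (B : Set G) = A := by
    rw [hB]; exact hCCA
  have hL'A : L' ≠ A := by
    intro heq
    have h1 : L = B := by rw [hCCL', heq, hB]
    exact hLB h1
  have hL'B : L' ≠ B := by
    intro heq
    have h1 : L = A := by rw [hCCL', heq, hCCA']
    exact hLA h1
  -- pairwise facts
  have pAB := hPair A B hACD hBCD hAZ hAtop hBZ hBtop hAB_ne
  have pLA := hPair L A hLCD hACD hLZ hLtop hAZ hAtop hLA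
  have pLB := hPair L B hLCD hBCD hLZ hLtop hBZ hBtop hLB
  have pL'A := hPair L' A hL'CD hACD hL'Z hL'top hAZ hAtop hL'A
  have pL'B := hPair L' B hL'CD hBCD hL'Z hL'top hBZ hBtop hL'B
  have pLL' := hPair L L' hLCD hL'CD hLZ hLtop hL'Z hL'top (Ne.symm hL'L)
  -- commuting
  have hcommAB : ∀ x ∈ A, ∀ y ∈ B, x * y = y * x := by
    intro x hx y hy
    exact Subgroup.mem_centralizer_iff.mp hy x hx
  have hcommLL' : ∀ x ∈ L, ∀ y ∈ L', x * y = y * x := by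
    intro x hx y hy
    exact Subgroup.mem_centralizer_iff.mp hy x hx
  -- sizes
  set cZ := Nat.card (Subgroup.center G) with hcZ
  have hZpos : 0 < cZ := Nat.card_pos
  have hcAL : Nat.card A = Nat.card L := by
    have h1 := pAB.2.2
    have h2 := pLB.2.2
    exact Nat.eq_of_mul_eq_mul_right Nat.card_pos (h1.trans h2.symm)
  have hcAB : Nat.card A = Nat.card B := by
    have h1 := pLA.2.2
    have h2 := pLB.2.2
    have h3 : Nat.card A = Nat.card B :=
      Nat.eq_of_mul_eq_mul_left Nat.card_pos (h1.trans h2.symm)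
    exact h3
  have hcAL' : Nat.card A = Nat.card L' := by
    have h1 := pL'B.2.2
    have h2 := pAB.2.2
    exact Nat.eq_of_mul_eq_mul_right Nat.card_pos (h2.trans h1.symm)
  set s := Nat.card A with hs
  -- |G| = p^(2a) * cZ
  have hGcard : Nat.card G = p ^ (2 * a) * cZ := by
    rw [Subgroup.card_eq_card_quotient_mul_card_subgroup (Subgroup.center G), hcard]
  have hspow : s = p ^ a * cZ := by
    have h1 : s * s = Nat.card G * cZ := by
      have := pAB.2.2
      rw [← hcAB] at this
      exact this
    have h2 : s * s = (p ^ a * cZ) * (p ^ a * cZ) := by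
      rw [h1, hGcard]
      have hpp : p ^ a * p ^ a = p ^ (2 * a) := by rw [← pow_add, two_mul]
      rw [← hpp]; ring
    have h3 : s ^ 2 = (p ^ a * cZ) ^ 2 := by
      rw [pow_two, pow_two]; exact h2
    exact Nat.pow_left_injective (by norm_num) h3
  -- class 2
  have hc2 : ∀ g h : G, ⁅g, h⁆ ∈ Subgroup.center G :=
    aux_class2 (le_of_eq pAB.1) hcommAB hcommLL' pL'B.2.1 pLB.2.1 pL'A.2.1 pLA.2.1 pAB.2.1
  -- conclude
  exact aux_final p a hp hp2 ha A B L L'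
    (le_of_lt hAZ) hZB (le_of_lt hLZ) hZL'
    pAB.1 pLA.1 pLB.1 pL'A.1 pL'B.1
    hcommAB hcommLL' pAB.2.1 hc2
    s rfl hcAB.symm hcAL.symm hcAL'.symm hspow hGcard hTop
    (fun X Y hX hY h1 h2 h3 h4 h5 => (hPair X Y hX hY h1 h2 h3 h4 h5).1)
    hnab
end
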